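/- Let n, k be natural numbers with 1 ≤ k ≤ n − 2, and let G be a connected finite simple graph on n vertices that has an edge cut of size at most k (i.e., there is a set F of at most k edges of G such that the graph obtained from G by deleting the edges of F is disconnected). Then Π₂(G) ≤ k^k · (n−1)^{k(n−1)} · (n−2)^{(n−2)(n−k−1)}, and equality holds if and only if G is isomorphic to K_n^k. -/

import Mathlib

/-- The second multiplicative Zagreb index `Π₂(G) = ∏_{u ∈ V(G)} d(u)^{d(u)}`
(with the natural-number convention `0^0 = 1`). -/
noncomputable def multZagreb2 {V : Type*} [Fintype V] (G : SimpleGraph V) : ℕ :=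
  letI := Classical.decRel G.Adj
  ∏ v : V, (G.degree v) ^ (G.degree v)

/-- The graph `K_n^k`: the complete graph `K_{n-1}` (on the vertices `some a`)
together with one extra vertex (`none`) joined to exactly `k` vertices of
`K_{n-1}`. -/
def Knk (n k : ℕ) : SimpleGraph (Option (Fin (n - 1))) :=
  SimpleGraph.fromRel (fun x y =>
    match x, y with
    | some _, some _ => True
    | none, some a => (a : ℕ) < k
    | some a, none => (a : ℕ) < k
    | none, none => False)

open Finset

private lemma zz_pow_self_pos (t : ℕ) : 0 < t ^ t := by
  rcases Nat.eq_zero_or_pos t with rfl | ht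
  · simp
  · exact Nat.pow_pos ht

private lemma zz_pow_self_le {s t : ℕ} (h : s ≤ t) : s ^ s ≤ t ^ t := by
  rcases Nat.eq_zero_or_pos s with rfl | hs
  · rw [pow_zero]; exact zz_pow_self_pos t
  · calc s ^ s ≤ t ^ s := Nat.pow_le_pow_left h s
    _ ≤ t ^ t := Nat.pow_le_pow_right (le_trans hs h) h

private lemma zz_pow_self_lt {s t : ℕ} (hs : 1 ≤ s) (h : s < t) : s ^ s < t ^ t := by
  calc s ^ s < t ^ s := Nat.pow_lt_pow_left h (by omega)
  _ ≤ t ^ t := Nat.pow_le_pow_right (by omega) (le_of_lt h)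

private lemma zz_two_le {j : ℕ} (hj : 1 ≤ j) : 2 * j ^ j ≤ (j + 1) ^ j := by
  have hJ : (0:ℝ) < (j:ℝ) := by exact_mod_cast hj
  have hb : (1:ℝ) + (j:ℝ) * ((j:ℝ)⁻¹) ≤ (1 + (j:ℝ)⁻¹) ^ j := by
    apply one_add_mul_le_pow
    have : (0:ℝ) ≤ (j:ℝ)⁻¹ := by positivity
    linarith
  have h2 : (2:ℝ) ≤ (1 + (j:ℝ)⁻¹) ^ j := by
    rw [mul_inv_cancel₀ (ne_of_gt hJ)] at hb; linarith
  have h3 : (2:ℝ) * (j:ℝ) ^ j ≤ ((j:ℝ) + 1) ^ j := by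
    have := mul_le_mul_of_nonneg_right h2 (le_of_lt (pow_pos hJ j))
    calc (2:ℝ) * (j:ℝ)^j ≤ (1 + (j:ℝ)⁻¹)^j * (j:ℝ)^j := by linarith
    _ = ((1 + (j:ℝ)⁻¹) * (j:ℝ))^j := by rw [mul_pow]
    _ = ((j:ℝ) + 1)^j := by rw [add_mul, one_mul, inv_mul_cancel₀ (ne_of_gt hJ), add_comm]
  exact_mod_cast h3

private lemma zz_three_le {m : ℕ} (hm : 1 ≤ m) : (m + 1) ^ m ≤ 3 * m ^ m := by
  have hM : (0:ℝ) < (m:ℝ) := by exact_mod_cast hm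
  have h1 : (1:ℝ) + (m:ℝ)⁻¹ ≤ Real.exp ((m:ℝ)⁻¹) := by
    have := Real.add_one_le_exp ((m:ℝ)⁻¹); linarith
  have h2 : ((1:ℝ) + (m:ℝ)⁻¹) ^ m ≤ Real.exp ((m:ℝ)⁻¹) ^ m := by
    apply pow_le_pow_left₀ (by positivity) h1
  have h3 : Real.exp ((m:ℝ)⁻¹) ^ m = Real.exp 1 := by
    rw [← Real.exp_nat_mul, mul_inv_cancel₀ (ne_of_gt hM)]
  have h4 : ((1:ℝ) + (m:ℝ)⁻¹) ^ m ≤ 3 := by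
    rw [h3] at h2
    have := Real.exp_one_lt_d9
    linarith
  have h5 : ((m:ℝ) + 1) ^ m ≤ 3 * (m:ℝ) ^ m := by
    have := mul_le_mul_of_nonneg_right h4 (le_of_lt (pow_pos hM m))
    calc ((m:ℝ)+1)^m = ((1 + (m:ℝ)⁻¹) * (m:ℝ))^m := by
          rw [add_mul, one_mul, inv_mul_cancel₀ (ne_of_gt hM), add_comm]
    _ = (1 + (m:ℝ)⁻¹)^m * (m:ℝ)^m := by rw [mul_pow]
    _ ≤ 3 * (m:ℝ)^m := this
  exact_mod_cast h5

private lemma zz_step {t u : ℕ} (h : t ≤ u) :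
    (t + 1) ^ (t + 1) * u ^ u ≤ t ^ t * (u + 1) ^ (u + 1) := by
  rcases Nat.eq_zero_or_pos t with rfl | ht
  · simpa using zz_pow_self_le (Nat.le_succ u)
  · have hu : 1 ≤ u := le_trans ht h
    have hT : (0:ℝ) < (t:ℝ) := by exact_mod_cast ht
    have hU : (0:ℝ) < (u:ℝ) := by exact_mod_cast hu
    have hTU : (t:ℝ) ≤ (u:ℝ) := by exact_mod_cast h
    set T := (t:ℝ); set U := (u:ℝ)
    have hw1 : (0:ℝ) ≤ T / U := by positivity
    have hw2 : (0:ℝ) ≤ 1 - T / U := by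
      have : T / U ≤ 1 := by rw [div_le_one hU]; exact hTU
      linarith
    have hp1 : (0:ℝ) ≤ (T + 1) / T := by positivity
    have hamgm := Real.geom_mean_le_arith_mean2_weighted hw1 hw2 hp1 zero_le_one
      (by ring : T / U + (1 - T / U) = 1)
    rw [Real.one_rpow, mul_one] at hamgm
    have harith : T / U * ((T + 1) / T) + (1 - T / U) * 1 = (U + 1) / U := by
      field_simp; ring
    rw [harith] at hamgm
    -- raise to power u
    have h6 : (((T + 1) / T) ^ (T / U : ℝ)) ^ (u:ℕ) ≤ ((U + 1) / U) ^ (u:ℕ) :=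
      pow_le_pow_left₀ (Real.rpow_nonneg hp1 _) hamgm u
    have h7 : (((T + 1) / T) ^ (T / U : ℝ)) ^ (u:ℕ) = ((T + 1) / T) ^ (t:ℕ) := by
      rw [← Real.rpow_natCast (((T + 1) / T) ^ (T / U : ℝ)) u, ← Real.rpow_mul hp1,
        div_mul_cancel₀ _ (ne_of_gt hU), Real.rpow_natCast]
    rw [h7] at h6
    have h8 : (T + 1) ^ t * U ^ u ≤ T ^ t * (U + 1) ^ u := by
      rw [div_pow, div_pow] at h6
      rw [div_le_div_iff₀ (by positivity) (by positivity)] at h6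
      linarith [h6]
    have h9 : (T + 1) ^ (t+1) * U ^ u ≤ T ^ t * (U + 1) ^ (u+1) := by
      have hle : T + 1 ≤ U + 1 := by linarith
      calc (T + 1) ^ (t+1) * U ^ u = (T + 1) * ((T + 1) ^ t * U ^ u) := by ring
      _ ≤ (U + 1) * (T ^ t * (U + 1) ^ u) := by
          apply mul_le_mul hle h8 (by positivity) (by positivity)
      _ = T ^ t * (U + 1) ^ (u+1) := by ring
    have h10 : ((t:ℝ) + 1) ^ (t+1) * (u:ℝ) ^ u ≤ (t:ℝ) ^ t * ((u:ℝ) + 1) ^ (u+1) := h9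
    exact_mod_cast h10

private lemma zz_iter {s x m : ℕ} (h : s + x ≤ m + 1) :
    (s + x) ^ (s + x) * m ^ (m * x) ≤ s ^ s * (m + 1) ^ ((m + 1) * x) := by
  induction x with
  | zero => simp
  | succ x ih =>
    have hsx : s + x ≤ m := by omega
    have ih' := ih (by omega)
    have hstep := zz_step hsx
    calc (s + (x+1)) ^ (s + (x+1)) * m ^ (m * (x+1))
        = ((s + x + 1) ^ (s + x + 1) * m ^ m) * m ^ (m * x) := by
          rw [mul_add, pow_add]; ring_nf
    _ ≤ ((s + x) ^ (s + x) * (m + 1) ^ (m + 1)) * m ^ (m * x) :=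
          Nat.mul_le_mul_right _ hstep
    _ = ((s + x) ^ (s + x) * m ^ (m * x)) * (m + 1) ^ (m + 1) := by ring
    _ ≤ (s ^ s * (m + 1) ^ ((m + 1) * x)) * (m + 1) ^ (m + 1) :=
          Nat.mul_le_mul_right _ ih'
    _ = s ^ s * (m + 1) ^ ((m + 1) * (x + 1)) := by rw [mul_add, pow_add]; ring

private lemma zz_main2core {m k : ℕ} (hm : 3 ≤ m) (hk1 : 1 ≤ k) (hkm : k ≤ m) :
    (3 * (m + 1)) ^ k < 2 ^ m * k ^ k * m ^ m := by
  have h34 : (3 * (m + 1)) ^ k ≤ (4 * m) ^ k :=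
    Nat.pow_le_pow_left (by omega) k
  have h4 : (4 * m) ^ k = 2 ^ k * (2 ^ k * m ^ k) := by
    rw [show (4 : ℕ) * m = 2 * (2 * m) by ring, mul_pow, mul_pow]
  rcases Nat.lt_or_ge k 2 with hk2 | hk2
  · -- k = 1
    have hk : k = 1 := by omega
    subst hk
    have h8 : 8 ≤ 2 ^ m := by
      calc (8:ℕ) = 2 ^ 3 := by norm_num
      _ ≤ 2 ^ m := Nat.pow_le_pow_right (by norm_num) hm
    have hmm : m ≤ m ^ m := Nat.le_self_pow (by omega) m
    calc (3 * (m + 1)) ^ 1 ≤ (4 * m) ^ 1 := h34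
    _ = 4 * m := by ring
    _ < 8 * m ^ m := by nlinarith
    _ ≤ 2 ^ m * m ^ m := Nat.mul_le_mul_right _ h8
    _ = 2 ^ m * 1 ^ 1 * m ^ m := by ring
  · -- k ≥ 2
    have h2k : 2 ^ k ≤ k ^ k := Nat.pow_le_pow_left hk2 k
    have h2m : 2 ^ k ≤ 2 ^ m := Nat.pow_le_pow_right (by norm_num) hkm
    rcases Nat.lt_or_ge k m with hlt | hge
    · -- k < m : strict from m ^ k < m ^ m
      have hmk : m ^ k < m ^ m := Nat.pow_lt_pow_right (by omega) hlt
      calc (3 * (m + 1)) ^ k ≤ 2 ^ k * (2 ^ k * m ^ k) := by rw [← h4]; exact h34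
      _ ≤ 2 ^ m * (k ^ k * m ^ k) := Nat.mul_le_mul h2m (Nat.mul_le_mul_right _ h2k)
      _ < 2 ^ m * (k ^ k * m ^ m) := by
          apply mul_lt_mul_of_pos_left _ (Nat.pow_pos (by norm_num))
          exact mul_lt_mul_of_pos_left hmk (zz_pow_self_pos k)
      _ = 2 ^ m * k ^ k * m ^ m := by ring
    · -- k = m ≥ 3 : strict from 2 ^ k < k ^ k
      have hkm' : k = m := by omega
      subst hkm'
      have h2kstrict : 2 ^ k < k ^ k := Nat.pow_lt_pow_left (by omega) (by omega)
      calc (3 * (k + 1)) ^ k ≤ 2 ^ k * (2 ^ k * k ^ k) := by rw [← h4]; exact h34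
      _ < 2 ^ k * (k ^ k * k ^ k) := by
          apply mul_lt_mul_of_pos_left _ (Nat.pow_pos (by norm_num))
          exact mul_lt_mul_of_pos_right h2kstrict (zz_pow_self_pos k)
      _ = 2 ^ k * k ^ k * k ^ k := by ring

private lemma zz_main2b {m k : ℕ} (hm : 2 ≤ m) (hk1 : 1 ≤ k) (hkm : k ≤ m) :
    (m - 1) ^ (m * m) * (m + 1) ^ ((m + 1) * k) < k ^ k * m ^ (m * (m + 1 + k)) := by
  rcases Nat.lt_or_ge m 3 with hm3 | hm3
  · -- m = 2
    have : m = 2 := by omega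
    subst this
    interval_cases k <;> norm_num
  · -- m ≥ 3
    have hm1 : 1 ≤ m - 1 := by omega
    have hA : 2 ^ m * (m - 1) ^ (m * m) ≤ m ^ (m * m) := by
      have h1 : 2 * (m - 1) ^ (m - 1) ≤ m ^ (m - 1) := by
        have := zz_two_le hm1
        rwa [show m - 1 + 1 = m by omega] at this
      have h2 : (2 * (m - 1) ^ (m - 1)) ^ m ≤ (m ^ (m - 1)) ^ m :=
        Nat.pow_le_pow_left h1 m
      rw [mul_pow, ← pow_mul, ← pow_mul] at h2
      calc 2 ^ m * (m - 1) ^ (m * m)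
          = 2 ^ m * (m - 1) ^ ((m - 1) * m) * (m - 1) ^ m := by
            rw [mul_assoc, ← pow_add]
            congr 2
            cases m with
            | zero => omega
            | succ m₀ => simp [Nat.add_sub_cancel]; ring
      _ ≤ m ^ ((m - 1) * m) * (m - 1) ^ m := Nat.mul_le_mul_right _ h2
      _ ≤ m ^ ((m - 1) * m) * m ^ m :=
            Nat.mul_le_mul_left _ (Nat.pow_le_pow_left (by omega) m)
      _ = m ^ (m * m) := by
            rw [← pow_add]
            congr 1
            have : 1 ≤ m := by omega
            calc (m - 1) * m + m = (m - 1 + 1) * m := by ring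
            _ = m * m := by rw [show m - 1 + 1 = m by omega]
    have hB : (m + 1) ^ ((m + 1) * k) ≤ (3 * (m + 1)) ^ k * m ^ (m * k) := by
      have h1 : (m + 1) ^ (m + 1) ≤ 3 * (m + 1) * m ^ m := by
        calc (m + 1) ^ (m + 1) = (m + 1) * (m + 1) ^ m := by rw [pow_succ]; ring
        _ ≤ (m + 1) * (3 * m ^ m) := Nat.mul_le_mul_left _ (zz_three_le (by omega))
        _ = 3 * (m + 1) * m ^ m := by ring
      calc (m + 1) ^ ((m + 1) * k) = ((m + 1) ^ (m + 1)) ^ k := by rw [← pow_mul]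
      _ ≤ (3 * (m + 1) * m ^ m) ^ k := Nat.pow_le_pow_left h1 k
      _ = (3 * (m + 1)) ^ k * m ^ (m * k) := by rw [mul_pow, ← pow_mul]
    have hC := zz_main2core hm3 hk1 hkm
    calc (m - 1) ^ (m * m) * (m + 1) ^ ((m + 1) * k)
        ≤ (m - 1) ^ (m * m) * ((3 * (m + 1)) ^ k * m ^ (m * k)) :=
          Nat.mul_le_mul_left _ hB
    _ < (m - 1) ^ (m * m) * ((2 ^ m * k ^ k * m ^ m) * m ^ (m * k)) := by
          apply mul_lt_mul_of_pos_left _ (Nat.pow_pos (by omega))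
          exact mul_lt_mul_of_pos_right hC (Nat.pow_pos (by omega))
    _ = (2 ^ m * (m - 1) ^ (m * m)) * (k ^ k * (m ^ m * m ^ (m * k))) := by ring
    _ ≤ m ^ (m * m) * (k ^ k * (m ^ m * m ^ (m * k))) :=
          Nat.mul_le_mul_right _ hA
    _ = k ^ k * m ^ (m * m + (m + m * k)) := by rw [pow_add, pow_add]; ring
    _ = k ^ k * m ^ (m * (m + 1 + k)) := by ring_nf

private lemma zz_main2 {m s t k e : ℕ} (hs : 1 ≤ s) (ht : 1 ≤ t) (hst : s + t = m)
    (hk1 : 1 ≤ k) (hkm : k ≤ m) (he : e ≤ 2 * k) :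
    s ^ (s * (s + 1)) * t ^ (t * (t + 1)) * (m + 1) ^ ((m + 1) * e) <
      k ^ k * (m + 1) ^ ((m + 1) * k) * (m ^ (m * (m + 1 - k)) * m ^ (m * e)) := by
  have hm2 : 2 ≤ m := by omega
  have hm1 : 1 ≤ m - 1 := by omega
  have hside : ∀ s' : ℕ, 1 ≤ s' → s' ≤ m - 1 →
      s' ^ (s' * (s' + 1)) ≤ (m - 1) ^ (m * s') := by
    intro s' h1 h2
    have ha : s' ^ (s' + 1) ≤ (m - 1) ^ m := by
      calc s' ^ (s' + 1) ≤ (m - 1) ^ (s' + 1) := Nat.pow_le_pow_left h2 _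
      _ ≤ (m - 1) ^ m := Nat.pow_le_pow_right hm1 (by omega)
    calc s' ^ (s' * (s' + 1)) = (s' ^ (s' + 1)) ^ s' := by
          rw [← pow_mul]; ring_nf
    _ ≤ ((m - 1) ^ m) ^ s' := Nat.pow_le_pow_left ha s'
    _ = (m - 1) ^ (m * s') := by rw [← pow_mul]
  have hfront : s ^ (s * (s + 1)) * t ^ (t * (t + 1)) ≤ (m - 1) ^ (m * m) := by
    calc s ^ (s * (s + 1)) * t ^ (t * (t + 1))
        ≤ (m - 1) ^ (m * s) * (m - 1) ^ (m * t) :=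
          Nat.mul_le_mul (hside s hs (by omega)) (hside t ht (by omega))
    _ = (m - 1) ^ (m * s + m * t) := by rw [← pow_add]
    _ = (m - 1) ^ (m * m) := by rw [← Nat.mul_add, hst]
  -- the inequality at e' = 2k
  have claim2k : (m - 1) ^ (m * m) * (m + 1) ^ ((m + 1) * (2 * k)) <
      k ^ k * (m + 1) ^ ((m + 1) * k) * (m ^ (m * (m + 1 - k)) * m ^ (m * (2 * k))) := by
    have h := zz_main2b hm2 hk1 hkm
    have h2 := mul_lt_mul_of_pos_right h
      (Nat.pow_pos (Nat.succ_pos m) : 0 < (m + 1) ^ ((m + 1) * k))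
    calc (m - 1) ^ (m * m) * (m + 1) ^ ((m + 1) * (2 * k))
        = (m - 1) ^ (m * m) * (m + 1) ^ ((m + 1) * k) * (m + 1) ^ ((m + 1) * k) := by
          rw [mul_assoc, ← pow_add, ← Nat.mul_add]
          congr 3
          omega
    _ < k ^ k * m ^ (m * (m + 1 + k)) * (m + 1) ^ ((m + 1) * k) := h2
    _ = k ^ k * (m + 1) ^ ((m + 1) * k) * (m ^ (m * (m + 1 - k)) * m ^ (m * (2 * k))) := by
          rw [show m * (m + 1 + k) = m * (m + 1 - k) + m * (2 * k) by
            have : m + 1 + k = (m + 1 - k) + 2 * k := by omega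
            rw [this]; ring, pow_add]
          ring
  -- transfer from 2k to e
  set X := (m + 1) ^ ((m + 1) * (2 * k - e)) with hX
  have hXpos : 0 < X := Nat.pow_pos (by omega)
  have hL : s ^ (s * (s + 1)) * t ^ (t * (t + 1)) * (m + 1) ^ ((m + 1) * e) * X =
      s ^ (s * (s + 1)) * t ^ (t * (t + 1)) * (m + 1) ^ ((m + 1) * (2 * k)) := by
    rw [hX, mul_assoc, ← pow_add, ← Nat.mul_add]
    congr 3
    omega
  have hR : k ^ k * (m + 1) ^ ((m + 1) * k) * (m ^ (m * (m + 1 - k)) * m ^ (m * (2 * k))) ≤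
      k ^ k * (m + 1) ^ ((m + 1) * k) * (m ^ (m * (m + 1 - k)) * m ^ (m * e)) * X := by
    have hsplit : m ^ (m * (2 * k)) = m ^ (m * e) * m ^ (m * (2 * k - e)) := by
      rw [← pow_add, ← Nat.mul_add]; congr 2; omega
    have hmX : m ^ (m * (2 * k - e)) ≤ X := by
      rw [hX]
      calc m ^ (m * (2 * k - e)) ≤ (m + 1) ^ (m * (2 * k - e)) :=
            Nat.pow_le_pow_left (by omega) _
      _ ≤ (m + 1) ^ ((m + 1) * (2 * k - e)) :=
            Nat.pow_le_pow_right (by omega) (Nat.mul_le_mul (by omega) le_rfl)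
    calc k ^ k * (m + 1) ^ ((m + 1) * k) * (m ^ (m * (m + 1 - k)) * m ^ (m * (2 * k)))
        = k ^ k * (m + 1) ^ ((m + 1) * k) * (m ^ (m * (m + 1 - k)) * m ^ (m * e)) *
            m ^ (m * (2 * k - e)) := by rw [hsplit]; ring
    _ ≤ k ^ k * (m + 1) ^ ((m + 1) * k) * (m ^ (m * (m + 1 - k)) * m ^ (m * e)) * X :=
          Nat.mul_le_mul_left _ hmX
  have hmain : s ^ (s * (s + 1)) * t ^ (t * (t + 1)) * (m + 1) ^ ((m + 1) * e) * X <
      k ^ k * (m + 1) ^ ((m + 1) * k) * (m ^ (m * (m + 1 - k)) * m ^ (m * e)) * X := by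
    calc s ^ (s * (s + 1)) * t ^ (t * (t + 1)) * (m + 1) ^ ((m + 1) * e) * X
        = s ^ (s * (s + 1)) * t ^ (t * (t + 1)) * (m + 1) ^ ((m + 1) * (2 * k)) := hL
    _ ≤ (m - 1) ^ (m * m) * (m + 1) ^ ((m + 1) * (2 * k)) :=
          Nat.mul_le_mul_right _ hfront
    _ < k ^ k * (m + 1) ^ ((m + 1) * k) * (m ^ (m * (m + 1 - k)) * m ^ (m * (2 * k))) :=
          claim2k
    _ ≤ _ := hR
  exact Nat.lt_of_mul_lt_mul_right hmain

private lemma zz_main1 {m c k : ℕ} (hm : 1 ≤ m) (hck : c ≤ k) (hkm : k ≤ m) :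
    c ^ c * ((m + 1) ^ ((m + 1) * c) * m ^ (m * (m + 1 - c))) ≤
      k ^ k * ((m + 1) ^ ((m + 1) * k) * m ^ (m * (m + 1 - k))) ∧
    (c < k → c ^ c * ((m + 1) ^ ((m + 1) * c) * m ^ (m * (m + 1 - c))) <
      k ^ k * ((m + 1) ^ ((m + 1) * k) * m ^ (m * (m + 1 - k)))) := by
  have hsplitL : m ^ (m * (m + 1 - c)) = m ^ (m * (k - c)) * m ^ (m * (m + 1 - k)) := by
    rw [← pow_add]; congr 1
    have : m * (m + 1 - c) = m * ((k - c) + (m + 1 - k)) := by congr 1; omega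
    rw [this]; ring
  have hsplitR : (m + 1) ^ ((m + 1) * k) =
      (m + 1) ^ ((m + 1) * c) * (m + 1) ^ ((m + 1) * (k - c)) := by
    rw [← pow_add]; congr 1
    have : (m + 1) * k = (m + 1) * (c + (k - c)) := by congr 1; omega
    rw [this]; ring
  have hcc : c ^ c ≤ k ^ k := zz_pow_self_le hck
  have hmid : m ^ (m * (k - c)) ≤ (m + 1) ^ ((m + 1) * (k - c)) := by
    calc m ^ (m * (k - c)) ≤ (m + 1) ^ (m * (k - c)) := Nat.pow_le_pow_left (by omega) _
    _ ≤ (m + 1) ^ ((m + 1) * (k - c)) :=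
        Nat.pow_le_pow_right (by omega) (Nat.mul_le_mul_right _ (by omega))
  constructor
  · calc c ^ c * ((m + 1) ^ ((m + 1) * c) * m ^ (m * (m + 1 - c)))
        = c ^ c * (m + 1) ^ ((m + 1) * c) * m ^ (m * (k - c)) * m ^ (m * (m + 1 - k)) := by
          rw [hsplitL]; ring
    _ ≤ k ^ k * (m + 1) ^ ((m + 1) * c) * (m + 1) ^ ((m + 1) * (k - c)) *
          m ^ (m * (m + 1 - k)) := by
          exact Nat.mul_le_mul_right _ (Nat.mul_le_mul (Nat.mul_le_mul_right _ hcc) hmid)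
    _ = k ^ k * ((m + 1) ^ ((m + 1) * k) * m ^ (m * (m + 1 - k))) := by
          rw [hsplitR]; ring
  · intro hlt
    have hd : 1 ≤ k - c := by omega
    have hmidstrict : m ^ (m * (k - c)) < (m + 1) ^ ((m + 1) * (k - c)) := by
      calc m ^ (m * (k - c)) ≤ (m + 1) ^ (m * (k - c)) := Nat.pow_le_pow_left (by omega) _
      _ < (m + 1) ^ ((m + 1) * (k - c)) := by
          apply Nat.pow_lt_pow_right (by omega)
          have : m * (k - c) < (m + 1) * (k - c) := by
            apply Nat.mul_lt_mul_of_lt_of_le (by omega) le_rfl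
            omega
          exact this
    calc c ^ c * ((m + 1) ^ ((m + 1) * c) * m ^ (m * (m + 1 - c)))
        = c ^ c * (m + 1) ^ ((m + 1) * c) * m ^ (m * (k - c)) * m ^ (m * (m + 1 - k)) := by
          rw [hsplitL]; ring
    _ < c ^ c * (m + 1) ^ ((m + 1) * c) * (m + 1) ^ ((m + 1) * (k - c)) *
          m ^ (m * (m + 1 - k)) := by
          apply mul_lt_mul_of_pos_right _ (Nat.pow_pos (by omega))
          exact mul_lt_mul_of_pos_left hmidstrict
            (Nat.mul_pos (zz_pow_self_pos c) (Nat.pow_pos (by omega)))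
    _ ≤ k ^ k * (m + 1) ^ ((m + 1) * c) * (m + 1) ^ ((m + 1) * (k - c)) *
          m ^ (m * (m + 1 - k)) := by
          exact Nat.mul_le_mul_right _ (Nat.mul_le_mul_right _ (Nat.mul_le_mul_right _ hcc))
    _ = k ^ k * ((m + 1) ^ ((m + 1) * k) * m ^ (m * (m + 1 - k))) := by
          rw [hsplitR]; ring


open Finset SimpleGraph

section Graph

variable {V : Type*} [Fintype V] [DecidableEq V]

private lemma zz_deg_congr (G : SimpleGraph V) (v : V)
    (i1 i2 : Fintype (G.neighborSet v)) :
    @SimpleGraph.degree V G v i1 = @SimpleGraph.degree V G v i2 := by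
  congr!

private lemma zz_multZagreb2_eq (G : SimpleGraph V) [DecidableRel G.Adj] :
    multZagreb2 G = ∏ v : V, (G.degree v) ^ (G.degree v) := by
  unfold multZagreb2
  apply Finset.prod_congr rfl
  intro v _
  congr 1 <;> exact zz_deg_congr G v _ _

private lemma zz_deg_pos {G : SimpleGraph V} [DecidableRel G.Adj] (hG : G.Connected)
    (h2 : 2 ≤ Fintype.card V) (v : V) : 0 < G.degree v := by
  rw [G.degree_pos_iff_exists_adj v]
  obtain ⟨w, hw⟩ := Fintype.exists_ne_of_one_lt_card (by omega) v
  obtain ⟨p⟩ := hG.preconnected v w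
  cases p with
  | nil => exact absurd rfl hw
  | cons h _ => exact ⟨_, h⟩

private lemma zz_cross_sum {G : SimpleGraph V} [DecidableRel G.Adj]
    (A : Finset V) (F : Finset (Sym2 V))
    (hcross : ∀ x y, x ∈ A → y ∉ A → G.Adj x y → s(x, y) ∈ F) :
    ∑ v ∈ A, (Aᶜ.filter (G.Adj v)).card ≤ F.card := by
  classical
  have hsum : ∑ v ∈ A, (Aᶜ.filter (G.Adj v)).card =
      ((A ×ˢ Aᶜ).filter (fun p => G.Adj p.1 p.2)).card := by
    rw [Finset.card_eq_sum_card_fiberwise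
      (f := Prod.fst) (t := A) (by
        intro p hp
        rw [Finset.mem_coe, Finset.mem_filter, Finset.mem_product] at hp
        exact hp.1.1)]
    apply Finset.sum_congr rfl
    intro v hv
    apply Finset.card_bij (fun w _ => (v, w))
    · intro w hw
      rw [Finset.mem_filter] at hw
      rw [Finset.mem_filter, Finset.mem_filter, Finset.mem_product]
      exact ⟨⟨⟨hv, hw.1⟩, hw.2⟩, rfl⟩
    · intro w₁ _ w₂ _ heq
      exact congrArg Prod.snd heq
    · intro p hp
      rw [Finset.mem_filter, Finset.mem_filter, Finset.mem_product] at hp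
      refine ⟨p.2, ?_, ?_⟩
      · rw [Finset.mem_filter]
        exact ⟨hp.1.1.2, hp.2 ▸ hp.1.2⟩
      · rw [← hp.2]
  rw [hsum]
  apply Finset.card_le_card_of_injOn (fun p => s(p.1, p.2))
  · intro p hp
    rw [Finset.mem_coe, Finset.mem_filter, Finset.mem_product, Finset.mem_compl] at hp
    exact hcross p.1 p.2 hp.1.1 hp.1.2 hp.2
  · intro p hp q hq heq
    rw [Finset.mem_coe, Finset.mem_filter, Finset.mem_product, Finset.mem_compl] at hp hq
    rw [Sym2.eq_iff] at heq
    rcases heq with ⟨h1, h2⟩ | ⟨h1, h2⟩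
    · exact Prod.ext h1 h2
    · exact absurd (h2 ▸ hq.1.1) hp.1.2

private lemma zz_extract {G : SimpleGraph V} [DecidableRel G.Adj] {k : ℕ}
    (hG : G.Connected)
    (hcut : ∃ F : Finset (Sym2 V), (F : Set (Sym2 V)) ⊆ G.edgeSet ∧ F.card ≤ k ∧
      ¬ (G.deleteEdges (F : Set (Sym2 V))).Connected) :
    ∃ A : Finset V, A.Nonempty ∧ Aᶜ.Nonempty ∧
      (∑ v ∈ A, (Aᶜ.filter (G.Adj v)).card ≤ k) ∧
      (∑ v ∈ Aᶜ, (A.filter (G.Adj v)).card ≤ k) := by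
  classical
  obtain ⟨F, hFsub, hFcard, hdis⟩ := hcut
  set G' := G.deleteEdges (F : Set (Sym2 V)) with hG'
  have hne : Nonempty V := hG.nonempty
  have hnp : ¬ G'.Preconnected := fun h => hdis (G'.connected_iff.mpr ⟨h, hne⟩)
  rw [SimpleGraph.Preconnected] at hnp
  push_neg at hnp
  obtain ⟨v, w, hvw⟩ := hnp
  set A : Finset V := univ.filter (fun x => G'.Reachable v x) with hA
  have hvA : v ∈ A := by
    rw [hA, Finset.mem_filter]
    exact ⟨Finset.mem_univ v, SimpleGraph.Reachable.refl v⟩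
  have hwA : w ∈ Aᶜ := by
    rw [Finset.mem_compl, hA, Finset.mem_filter]
    push_neg
    intro _
    exact hvw
  have hcross : ∀ x y, x ∈ A → y ∉ A → G.Adj x y → s(x, y) ∈ F := by
    intro x y hx hy hadj
    by_contra hF
    apply hy
    rw [hA, Finset.mem_filter] at hx ⊢
    refine ⟨Finset.mem_univ y, hx.2.trans ?_⟩
    have : G'.Adj x y := by
      rw [hG', SimpleGraph.deleteEdges_adj]
      exact ⟨hadj, hF⟩
    exact this.reachable
  have hcross' : ∀ x y, x ∈ Aᶜ → y ∉ Aᶜ → G.Adj x y → s(x, y) ∈ F := by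
    intro x y hx hy hadj
    rw [Sym2.eq_swap]
    rw [Finset.mem_compl] at hx
    rw [Finset.mem_compl, not_not] at hy
    exact hcross y x hy hx hadj.symm
  refine ⟨A, ⟨v, hvA⟩, ⟨w, hwA⟩, le_trans (zz_cross_sum A F hcross) hFcard, ?_⟩
  have := zz_cross_sum (G := G) Aᶜ F hcross'
  rw [compl_compl] at this
  exact le_trans this hFcard



private lemma zz_one_side {G : SimpleGraph V} [DecidableRel G.Adj]
    {n k : ℕ} (hk : 1 ≤ k) (hkn : k ≤ n - 2)
    (hV : Fintype.card V = n) (hG : G.Connected)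
    {u : V} (hu : G.degree u ≤ k) :
    (∃ w, G.degree w = k ∧ ∀ v v', v ≠ w → v' ≠ w → v ≠ v' → G.Adj v v') ∨
      multZagreb2 G <
        k ^ k * (n - 1) ^ (k * (n - 1)) * (n - 2) ^ ((n - 2) * (n - k - 1)) := by
  obtain ⟨m, rfl⟩ : ∃ m, n = m + 2 := ⟨n - 2, by omega⟩
  have hm1 : 1 ≤ m := by omega
  have hkm : k ≤ m := by omega
  have hcard : Fintype.card V = m + 2 := hV
  have hRHS : k ^ k * (m + 2 - 1) ^ (k * (m + 2 - 1)) *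
      (m + 2 - 2) ^ ((m + 2 - 2) * (m + 2 - k - 1)) =
      k ^ k * ((m + 1) ^ ((m + 1) * k) * m ^ (m * (m + 1 - k))) := by
    have e1 : m + 2 - 1 = m + 1 := by omega
    have e2 : m + 2 - 2 = m := by omega
    have e3 : m + 2 - k - 1 = m + 1 - k := by omega
    rw [e1, e2, e3, mul_comm k (m + 1), mul_assoc]
  rw [hRHS]
  set c := G.degree u with hc
  have hsplit : multZagreb2 G = c ^ c * ∏ v ∈ univ.erase u, G.degree v ^ G.degree v := by
    rw [zz_multZagreb2_eq]
    exact (Finset.mul_prod_erase univ _ (Finset.mem_univ u)).symm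
  have hNu : (univ.erase u).filter (fun v => G.Adj u v) = G.neighborFinset u := by
    ext x
    simp only [Finset.mem_filter, Finset.mem_erase, Finset.mem_univ, true_and, and_true,
      SimpleGraph.mem_neighborFinset]
    exact ⟨fun h => h.2, fun h => ⟨(G.ne_of_adj h).symm, h⟩⟩
  have hcu : ((univ.erase u).filter (fun v => G.Adj u v)).card = c := by
    rw [hNu]; rfl
  have hcardE : (univ.erase u).card = m + 1 := by
    rw [Finset.card_erase_of_mem (Finset.mem_univ u), Finset.card_univ, hcard]
    omega
  have hsubN : ∀ v, v ≠ u → ¬ G.Adj u v →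
      G.neighborFinset v ⊆ (univ.erase v).erase u := by
    intro v hvu hadj w hw
    rw [SimpleGraph.mem_neighborFinset] at hw
    rw [Finset.mem_erase, Finset.mem_erase]
    refine ⟨?_, (G.ne_of_adj hw).symm, Finset.mem_univ w⟩
    intro h
    exact hadj (h ▸ hw).symm
  have hcard2 : ∀ v, v ≠ u → ((univ.erase v).erase u).card = m := by
    intro v hvu
    rw [Finset.card_erase_of_mem (by
        rw [Finset.mem_erase]
        exact ⟨hvu.symm, Finset.mem_univ u⟩),
      Finset.card_erase_of_mem (Finset.mem_univ v), Finset.card_univ, hcard]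
    omega
  have hdb : ∀ v ∈ univ.erase u, G.degree v ≤ (if G.Adj u v then m + 1 else m) := by
    intro v hv
    rw [Finset.mem_erase] at hv
    by_cases hadj : G.Adj u v
    · simp only [hadj, if_true]
      have := G.degree_lt_card_verts v
      omega
    · simp only [hadj, if_false]
      have h1 := Finset.card_le_card (hsubN v hv.1 hadj)
      rw [hcard2 v hv.1] at h1
      exact h1
  have hprodB : ∏ v ∈ univ.erase u, (if G.Adj u v then m + 1 else m) ^
      (if G.Adj u v then m + 1 else m) =
      (m + 1) ^ ((m + 1) * c) * m ^ (m * (m + 1 - c)) := by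
    have hstep : ∀ v ∈ univ.erase u, (if G.Adj u v then m + 1 else m) ^
        (if G.Adj u v then m + 1 else m) =
        (if G.Adj u v then (m + 1) ^ (m + 1) else m ^ m) := by
      intro v _
      by_cases hadj : G.Adj u v <;> simp [hadj]
    rw [Finset.prod_congr rfl hstep, Finset.prod_ite, Finset.prod_const, Finset.prod_const,
      hcu]
    have hcc : ((univ.erase u).filter (fun v => ¬ G.Adj u v)).card = m + 1 - c := by
      rw [Finset.filter_not, Finset.card_sdiff_of_subset (Finset.filter_subset _ _), hcu, hcardE]
    rw [hcc, ← pow_mul, ← pow_mul]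
  have hub : multZagreb2 G ≤
      c ^ c * ((m + 1) ^ ((m + 1) * c) * m ^ (m * (m + 1 - c))) := by
    rw [hsplit, ← hprodB]
    apply Nat.mul_le_mul_left
    apply Finset.prod_le_prod'
    intro v hv
    exact zz_pow_self_le (hdb v hv)
  have hck : c ≤ k := hu
  have hmain := zz_main1 hm1 hck hkm
  rcases Nat.lt_or_ge c k with hlt | hge
  · right
    exact lt_of_le_of_lt hub (hmain.2 hlt)
  · -- c = k
    have hceq : c = k := le_antisymm hck hge
    by_cases hwit : ∃ v ∈ univ.erase u, G.degree v < (if G.Adj u v then m + 1 else m)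
    · right
      obtain ⟨v₀, hv₀, hv₀lt⟩ := hwit
      have hstrict : ∏ v ∈ univ.erase u, G.degree v ^ G.degree v <
          ∏ v ∈ univ.erase u, (if G.Adj u v then m + 1 else m) ^
            (if G.Adj u v then m + 1 else m) := by
        apply Finset.prod_lt_prod
        · intro i _
          exact zz_pow_self_pos _
        · intro i hi
          exact zz_pow_self_le (hdb i hi)
        · refine ⟨v₀, hv₀, ?_⟩
          exact zz_pow_self_lt (zz_deg_pos hG (by omega) v₀) hv₀lt
      have h2 : multZagreb2 G <
          c ^ c * ((m + 1) ^ ((m + 1) * c) * m ^ (m * (m + 1 - c))) := by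
        rw [hsplit, ← hprodB]
        exact mul_lt_mul_of_pos_left hstrict (zz_pow_self_pos c)
      rw [hceq] at h2
      exact h2
    · left
      push_neg at hwit
      have hdeq : ∀ v ∈ univ.erase u, G.degree v = (if G.Adj u v then m + 1 else m) := by
        intro v hv
        exact le_antisymm (hdb v hv) (hwit v hv)
      refine ⟨u, hceq ▸ rfl, ?_⟩
      intro v w' hvu hw'u hvw'
      have hvmem : v ∈ univ.erase u := Finset.mem_erase.mpr ⟨hvu, Finset.mem_univ v⟩
      have hdv := hdeq v hvmem
      by_cases hadj : G.Adj u v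
      · -- degree v = m + 1, so v adjacent to everything else
        rw [if_pos hadj] at hdv
        have hsub : G.neighborFinset v ⊆ univ.erase v := by
          intro w hw
          rw [SimpleGraph.mem_neighborFinset] at hw
          exact Finset.mem_erase.mpr ⟨(G.ne_of_adj hw).symm, Finset.mem_univ w⟩
        have hcardv : (univ.erase v).card = m + 1 := by
          rw [Finset.card_erase_of_mem (Finset.mem_univ v), Finset.card_univ, hcard]
          omega
        have heq : G.neighborFinset v = univ.erase v := by
          apply Finset.eq_of_subset_of_card_le hsub
          rw [hcardv]
          rw [SimpleGraph.card_neighborFinset_eq_degree, hdv]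
        have : w' ∈ G.neighborFinset v := by
          rw [heq]
          exact Finset.mem_erase.mpr ⟨Ne.symm hvw', Finset.mem_univ w'⟩
        rw [SimpleGraph.mem_neighborFinset] at this
        exact this
      · rw [if_neg hadj] at hdv
        have heq : G.neighborFinset v = (univ.erase v).erase u := by
          apply Finset.eq_of_subset_of_card_le (hsubN v hvu hadj)
          rw [hcard2 v hvu, SimpleGraph.card_neighborFinset_eq_degree, hdv]
        have : w' ∈ G.neighborFinset v := by
          rw [heq]
          exact Finset.mem_erase.mpr ⟨hw'u,
            Finset.mem_erase.mpr ⟨Ne.symm hvw', Finset.mem_univ w'⟩⟩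
        rw [SimpleGraph.mem_neighborFinset] at this
        exact this

private lemma zz_two_side {G : SimpleGraph V} [DecidableRel G.Adj]
    {n k : ℕ} (hk : 1 ≤ k) (hkn : k ≤ n - 2) (hV : Fintype.card V = n)
    {A : Finset V} (hA2 : 2 ≤ A.card) (hB2 : 2 ≤ Aᶜ.card)
    (hcA : ∑ v ∈ A, (Aᶜ.filter (G.Adj v)).card ≤ k)
    (hcB : ∑ v ∈ Aᶜ, (A.filter (G.Adj v)).card ≤ k) :
    multZagreb2 G <
      k ^ k * (n - 1) ^ (k * (n - 1)) * (n - 2) ^ ((n - 2) * (n - k - 1)) := by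
  obtain ⟨m, rfl⟩ : ∃ m, n = m + 2 := ⟨n - 2, by omega⟩
  have hm1 : 1 ≤ m := by omega
  have hkm : k ≤ m := by omega
  have hcard : Fintype.card V = m + 2 := hV
  have hRHS : k ^ k * (m + 2 - 1) ^ (k * (m + 2 - 1)) *
      (m + 2 - 2) ^ ((m + 2 - 2) * (m + 2 - k - 1)) =
      k ^ k * ((m + 1) ^ ((m + 1) * k) * m ^ (m * (m + 1 - k))) := by
    have e1 : m + 2 - 1 = m + 1 := by omega
    have e2 : m + 2 - 2 = m := by omega
    have e3 : m + 2 - k - 1 = m + 1 - k := by omega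
    rw [e1, e2, e3, mul_comm k (m + 1), mul_assoc]
  rw [hRHS]
  have hside : ∀ S : Finset V, 2 ≤ S.card →
      (∏ v ∈ S, G.degree v ^ G.degree v) *
          m ^ (m * (∑ v ∈ S, (Sᶜ.filter (G.Adj v)).card)) ≤
      (S.card - 1) ^ ((S.card - 1) * S.card) *
        (m + 1) ^ ((m + 1) * (∑ v ∈ S, (Sᶜ.filter (G.Adj v)).card)) := by
    intro S hS
    have hSc : S.card + Sᶜ.card = m + 2 := by
      rw [Finset.card_add_card_compl, hcard]
    have hdeg : ∀ v ∈ S, G.degree v ≤ (S.card - 1) + (Sᶜ.filter (G.Adj v)).card := by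
      intro v hv
      have hsplitd : ((G.neighborFinset v).filter (· ∈ S)).card +
          ((G.neighborFinset v).filter (fun w => ¬ w ∈ S)).card = G.degree v := by
        rw [Finset.card_filter_add_card_filter_not,
          SimpleGraph.card_neighborFinset_eq_degree]
      have h1 : ((G.neighborFinset v).filter (· ∈ S)) ⊆ S.erase v := by
        intro w hw
        rw [Finset.mem_filter, SimpleGraph.mem_neighborFinset] at hw
        exact Finset.mem_erase.mpr ⟨(G.ne_of_adj hw.1).symm, hw.2⟩
      have h2 : ((G.neighborFinset v).filter (fun w => ¬ w ∈ S)) ⊆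
          Sᶜ.filter (G.Adj v) := by
        intro w hw
        rw [Finset.mem_filter, SimpleGraph.mem_neighborFinset] at hw
        rw [Finset.mem_filter, Finset.mem_compl]
        exact ⟨hw.2, hw.1⟩
      have c1 := Finset.card_le_card h1
      have c2 := Finset.card_le_card h2
      rw [Finset.card_erase_of_mem hv] at c1
      omega
    have hxle : ∀ v ∈ S, (Sᶜ.filter (G.Adj v)).card ≤ Sᶜ.card := fun v _ =>
      Finset.card_le_card (Finset.filter_subset _ _)
    have hterm : ∀ v ∈ S, (G.degree v ^ G.degree v) *
        m ^ (m * (Sᶜ.filter (G.Adj v)).card) ≤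
        (S.card - 1) ^ (S.card - 1) *
          (m + 1) ^ ((m + 1) * (Sᶜ.filter (G.Adj v)).card) := by
      intro v hv
      have hx := hxle v hv
      have hle1 : G.degree v ^ G.degree v ≤
          ((S.card - 1) + (Sᶜ.filter (G.Adj v)).card) ^
            ((S.card - 1) + (Sᶜ.filter (G.Adj v)).card) :=
        zz_pow_self_le (hdeg v hv)
      have hiter := zz_iter (s := S.card - 1) (x := (Sᶜ.filter (G.Adj v)).card)
        (m := m) (by omega)
      calc (G.degree v ^ G.degree v) * m ^ (m * (Sᶜ.filter (G.Adj v)).card)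
          ≤ ((S.card - 1) + (Sᶜ.filter (G.Adj v)).card) ^
              ((S.card - 1) + (Sᶜ.filter (G.Adj v)).card) *
            m ^ (m * (Sᶜ.filter (G.Adj v)).card) := Nat.mul_le_mul_right _ hle1
      _ ≤ (S.card - 1) ^ (S.card - 1) *
            (m + 1) ^ ((m + 1) * (Sᶜ.filter (G.Adj v)).card) := hiter
    calc (∏ v ∈ S, G.degree v ^ G.degree v) *
        m ^ (m * (∑ v ∈ S, (Sᶜ.filter (G.Adj v)).card))
        = ∏ v ∈ S, (G.degree v ^ G.degree v) *
            m ^ (m * (Sᶜ.filter (G.Adj v)).card) := by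
          rw [Finset.prod_mul_distrib, Finset.prod_pow_eq_pow_sum, Finset.mul_sum]
    _ ≤ ∏ v ∈ S, (S.card - 1) ^ (S.card - 1) *
            (m + 1) ^ ((m + 1) * (Sᶜ.filter (G.Adj v)).card) :=
          Finset.prod_le_prod' hterm
    _ = (S.card - 1) ^ ((S.card - 1) * S.card) *
          (m + 1) ^ ((m + 1) * (∑ v ∈ S, (Sᶜ.filter (G.Adj v)).card)) := by
          rw [Finset.prod_mul_distrib, Finset.prod_const, ← pow_mul,
            Finset.prod_pow_eq_pow_sum, ← Finset.mul_sum]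
  obtain ⟨p, hpA⟩ : ∃ p, A.card = p + 1 := ⟨A.card - 1, by omega⟩
  obtain ⟨q, hqB⟩ : ∃ q, Aᶜ.card = q + 1 := ⟨Aᶜ.card - 1, by omega⟩
  have habm : A.card + Aᶜ.card = m + 2 := by
    rw [Finset.card_add_card_compl, hcard]
  have hp1 : 1 ≤ p := by omega
  have hq1 : 1 ≤ q := by omega
  have hpq : p + q = m := by omega
  set cA := ∑ v ∈ A, (Aᶜ.filter (G.Adj v)).card with hcAdef
  set cB := ∑ v ∈ Aᶜ, (A.filter (G.Adj v)).card with hcBdef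
  have hsA := hside A hA2
  have hsB := hside Aᶜ hB2
  rw [compl_compl] at hsB
  rw [hpA] at hsA
  rw [hqB] at hsB
  simp only [Nat.add_sub_cancel] at hsA hsB
  have hmain := zz_main2 (e := cA + cB) hp1 hq1 hpq hk hkm (by omega)
  have hcomb : multZagreb2 G * m ^ (m * (cA + cB)) ≤
      p ^ (p * (p + 1)) * q ^ (q * (q + 1)) * (m + 1) ^ ((m + 1) * (cA + cB)) := by
    calc multZagreb2 G * m ^ (m * (cA + cB))
        = ((∏ v ∈ A, G.degree v ^ G.degree v) * m ^ (m * cA)) *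
          ((∏ v ∈ Aᶜ, G.degree v ^ G.degree v) * m ^ (m * cB)) := by
          rw [zz_multZagreb2_eq, ← Finset.prod_mul_prod_compl A]
          rw [Nat.mul_add, pow_add]
          ring
    _ ≤ (p ^ (p * (p + 1)) * (m + 1) ^ ((m + 1) * cA)) *
          (q ^ (q * (q + 1)) * (m + 1) ^ ((m + 1) * cB)) := Nat.mul_le_mul hsA hsB
    _ = p ^ (p * (p + 1)) * q ^ (q * (q + 1)) * (m + 1) ^ ((m + 1) * (cA + cB)) := by
          rw [Nat.mul_add (m + 1), pow_add]
          ring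
  have hfinal : multZagreb2 G * m ^ (m * (cA + cB)) <
      (k ^ k * ((m + 1) ^ ((m + 1) * k) * m ^ (m * (m + 1 - k)))) *
        m ^ (m * (cA + cB)) := by
    calc multZagreb2 G * m ^ (m * (cA + cB))
        ≤ p ^ (p * (p + 1)) * q ^ (q * (q + 1)) * (m + 1) ^ ((m + 1) * (cA + cB)) := hcomb
    _ < k ^ k * (m + 1) ^ ((m + 1) * k) * (m ^ (m * (m + 1 - k)) * m ^ (m * (cA + cB))) :=
          hmain
    _ = (k ^ k * ((m + 1) ^ ((m + 1) * k) * m ^ (m * (m + 1 - k)))) *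
          m ^ (m * (cA + cB)) := by ring
  exact Nat.lt_of_mul_lt_mul_right hfinal

private lemma zz_key {G : SimpleGraph V} [DecidableRel G.Adj]
    {n k : ℕ} (hk : 1 ≤ k) (hkn : k ≤ n - 2)
    (hV : Fintype.card V = n) (hG : G.Connected)
    (hcut : ∃ F : Finset (Sym2 V), (F : Set (Sym2 V)) ⊆ G.edgeSet ∧ F.card ≤ k ∧
      ¬ (G.deleteEdges (F : Set (Sym2 V))).Connected) :
    (∃ w, G.degree w = k ∧ ∀ v v', v ≠ w → v' ≠ w → v ≠ v' → G.Adj v v') ∨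
      multZagreb2 G <
        k ^ k * (n - 1) ^ (k * (n - 1)) * (n - 2) ^ ((n - 2) * (n - k - 1)) := by
  obtain ⟨A, hAne, hBne, hcA, hcB⟩ := zz_extract hG hcut
  have hA1 : 1 ≤ A.card := Finset.card_pos.mpr hAne
  have hB1 : 1 ≤ Aᶜ.card := Finset.card_pos.mpr hBne
  rcases Nat.lt_or_ge A.card 2 with hA2 | hA2
  · -- A = {u}
    have : A.card = 1 := by omega
    obtain ⟨u, hu⟩ := Finset.card_eq_one.mp this
    subst hu
    have hdeg : G.degree u ≤ k := by
      rw [Finset.sum_singleton] at hcA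
      have : ({u} : Finset V)ᶜ.filter (G.Adj u) = G.neighborFinset u := by
        ext x
        simp only [Finset.mem_filter, Finset.mem_compl, Finset.mem_singleton,
          SimpleGraph.mem_neighborFinset]
        exact ⟨fun h => h.2, fun h => ⟨(G.ne_of_adj h).symm, h⟩⟩
      rw [this] at hcA
      exact hcA
    exact zz_one_side hk hkn hV hG hdeg
  rcases Nat.lt_or_ge Aᶜ.card 2 with hB2 | hB2
  · have : Aᶜ.card = 1 := by omega
    obtain ⟨u, hu⟩ := Finset.card_eq_one.mp this
    have hdeg : G.degree u ≤ k := by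
      rw [hu, Finset.sum_singleton] at hcB
      have hAc : A = ({u} : Finset V)ᶜ := by
        rw [← hu, compl_compl]
      rw [hAc] at hcB
      have : ({u} : Finset V)ᶜ.filter (G.Adj u) = G.neighborFinset u := by
        ext x
        simp only [Finset.mem_filter, Finset.mem_compl, Finset.mem_singleton,
          SimpleGraph.mem_neighborFinset]
        exact ⟨fun h => h.2, fun h => ⟨(G.ne_of_adj h).symm, h⟩⟩
      rw [this] at hcB
      exact hcB
    exact zz_one_side hk hkn hV hG hdeg
  · right
    exact zz_two_side hk hkn hV hA2 hB2 hcA hcB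

end Graph


section KnkFacts

private lemma zz_knk_adj_ss {n k : ℕ} (a b : Fin (n - 1)) :
    (Knk n k).Adj (some a) (some b) ↔ a ≠ b := by
  unfold Knk
  rw [SimpleGraph.fromRel_adj]
  simp

private lemma zz_knk_adj_ns {n k : ℕ} (a : Fin (n - 1)) :
    (Knk n k).Adj none (some a) ↔ (a : ℕ) < k := by
  unfold Knk
  rw [SimpleGraph.fromRel_adj]
  simp

private lemma zz_knk_adj_sn {n k : ℕ} (a : Fin (n - 1)) :
    (Knk n k).Adj (some a) none ↔ (a : ℕ) < k := by
  rw [SimpleGraph.adj_comm]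
  exact zz_knk_adj_ns a

private lemma zz_knk_adj_nn {n k : ℕ} : ¬ (Knk n k).Adj none none :=
  (Knk n k).irrefl

private lemma zz_knk_zagreb {m k : ℕ} (hk1 : 1 ≤ k) (hkm : k ≤ m) :
    multZagreb2 (Knk (m + 2) k) =
      k ^ k * ((m + 1) ^ ((m + 1) * k) * m ^ (m * (m + 1 - k))) := by
  classical
  have hfin : m + 2 - 1 = m + 1 := by omega
  set bk : Fin (m + 2 - 1) := ⟨k, by omega⟩ with hbk
  -- degree of none
  have hdegnone : (Knk (m + 2) k).degree none = k := by
    rw [← SimpleGraph.card_neighborFinset_eq_degree, SimpleGraph.neighborFinset_eq_filter]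
    have heq : (univ.filter ((Knk (m + 2) k).Adj none)) =
        (Finset.Iio bk).map ⟨some, Option.some_injective _⟩ := by
      ext x
      cases x with
      | none => simp [zz_knk_adj_nn]
      | some a =>
        simp only [Finset.mem_filter, Finset.mem_univ, true_and, Finset.mem_map,
          Function.Embedding.coeFn_mk, Option.some.injEq, Finset.mem_Iio]
        rw [zz_knk_adj_ns]
        constructor
        · intro h
          exact ⟨a, by rw [Fin.lt_def]; exact h, rfl⟩
        · rintro ⟨b, hb, rfl⟩
          rw [Fin.lt_def] at hb
          exact hb
    rw [heq, Finset.card_map, Fin.card_Iio]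
  -- degree of some a
  have hdegsome : ∀ a : Fin (m + 2 - 1),
      (Knk (m + 2) k).degree (some a) = if (a : ℕ) < k then m + 1 else m := by
    intro a
    rw [← SimpleGraph.card_neighborFinset_eq_degree, SimpleGraph.neighborFinset_eq_filter]
    by_cases ha : (a : ℕ) < k
    · rw [if_pos ha]
      have heq : (univ.filter ((Knk (m + 2) k).Adj (some a))) = univ.erase (some a) := by
        ext x
        cases x with
        | none =>
          simp only [Finset.mem_filter, Finset.mem_univ, true_and, Finset.mem_erase,
            ne_eq, reduceCtorEq, not_false_eq_true, and_true]
          rw [zz_knk_adj_sn]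
          simp [ha]
        | some b =>
          simp only [Finset.mem_filter, Finset.mem_univ, true_and, Finset.mem_erase,
            ne_eq, Option.some.injEq, and_true]
          rw [zz_knk_adj_ss]
          exact ne_comm
      rw [heq, Finset.card_erase_of_mem (Finset.mem_univ _), Finset.card_univ,
        Fintype.card_option, Fintype.card_fin, hfin]
      omega
    · rw [if_neg ha]
      have heq : (univ.filter ((Knk (m + 2) k).Adj (some a))) =
          (univ.erase (some a)).erase none := by
        ext x
        cases x with
        | none =>
          simp only [Finset.mem_filter, Finset.mem_univ, true_and, Finset.mem_erase,
            ne_eq, not_true_eq_false, false_and, iff_false]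
          rw [zz_knk_adj_sn]
          exact ha
        | some b =>
          simp only [Finset.mem_filter, Finset.mem_univ, true_and, Finset.mem_erase,
            Option.some.injEq, ne_eq, reduceCtorEq, not_false_eq_true, true_and, and_true]
          rw [zz_knk_adj_ss]
          exact ne_comm
      rw [heq, Finset.card_erase_of_mem, Finset.card_erase_of_mem (Finset.mem_univ _),
        Finset.card_univ, Fintype.card_option, Fintype.card_fin]
      · omega
      · rw [Finset.mem_erase]
        exact ⟨by simp, Finset.mem_univ _⟩
  -- the product
  rw [zz_multZagreb2_eq, Fintype.prod_option, hdegnone]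
  congr 1
  have hstep : ∀ a : Fin (m + 2 - 1),
      (Knk (m + 2) k).degree (some a) ^ (Knk (m + 2) k).degree (some a) =
      if (a : ℕ) < k then (m + 1) ^ (m + 1) else m ^ m := by
    intro a
    rw [hdegsome a]
    by_cases ha : (a : ℕ) < k <;> simp [ha]
  rw [Finset.prod_congr rfl (fun a _ => hstep a), Finset.prod_ite, Finset.prod_const,
    Finset.prod_const]
  have hfilter : (univ.filter (fun a : Fin (m + 2 - 1) => (a : ℕ) < k)) = Finset.Iio bk := by
    ext a
    simp only [Finset.mem_filter, Finset.mem_univ, true_and, Finset.mem_Iio, Fin.lt_def]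
    exact Iff.rfl
  have hc1 : (univ.filter (fun a : Fin (m + 2 - 1) => (a : ℕ) < k)).card = k := by
    rw [hfilter, Fin.card_Iio]
  have hc2 : (univ.filter (fun a : Fin (m + 2 - 1) => ¬ (a : ℕ) < k)).card = m + 1 - k := by
    rw [Finset.filter_not, Finset.card_sdiff_of_subset (Finset.filter_subset _ _), hc1,
      Finset.card_univ, Fintype.card_fin, hfin]
  rw [hc1, hc2, ← pow_mul, ← pow_mul]

private lemma zz_knk_val {n k : ℕ} (hk : 1 ≤ k) (hkn : k ≤ n - 2) :
    multZagreb2 (Knk n k) =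
      k ^ k * (n - 1) ^ (k * (n - 1)) * (n - 2) ^ ((n - 2) * (n - k - 1)) := by
  obtain ⟨m, rfl⟩ : ∃ m, n = m + 2 := ⟨n - 2, by omega⟩
  rw [zz_knk_zagreb hk (by omega)]
  have e1 : m + 2 - 1 = m + 1 := by omega
  have e2 : m + 2 - 2 = m := by omega
  have e3 : m + 2 - k - 1 = m + 1 - k := by omega
  rw [e1, e2, e3, mul_comm k (m + 1), mul_assoc]

end KnkFacts

private lemma zz_iso_inv {V W : Type*} [Fintype V] [Fintype W]
    (G : SimpleGraph V) (H : SimpleGraph W) (e : G ≃g H) :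
    multZagreb2 G = multZagreb2 H := by
  classical
  rw [zz_multZagreb2_eq, zz_multZagreb2_eq]
  rw [← Equiv.prod_comp e.toEquiv (fun w => H.degree w ^ H.degree w)]
  apply Finset.prod_congr rfl
  intro v _
  have hdeg : G.degree v = H.degree (e.toEquiv v) := by
    have h1 : G.degree v = Fintype.card (G.neighborSet v) := by
      rw [← SimpleGraph.card_neighborFinset_eq_degree, SimpleGraph.neighborFinset_def,
        Set.toFinset_card]
    have h2 : H.degree (e.toEquiv v) = Fintype.card (H.neighborSet (e.toEquiv v)) := by
      rw [← SimpleGraph.card_neighborFinset_eq_degree, SimpleGraph.neighborFinset_def,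
        Set.toFinset_card]
    rw [h1, h2]
    exact Fintype.card_congr (e.mapNeighborSet v)
  rw [hdeg]

private lemma zz_structure_iso {V : Type*} [Fintype V] [DecidableEq V]
    {G : SimpleGraph V} [DecidableRel G.Adj] {n k : ℕ}
    (hV : Fintype.card V = n) (hk : 1 ≤ k) (hkn : k ≤ n - 2)
    {u : V} (hdeg : G.degree u = k)
    (hcomp : ∀ v v', v ≠ u → v' ≠ u → v ≠ v' → G.Adj v v') :
    Nonempty (G ≃g Knk n k) := by
  have hn3 : 3 ≤ n := by omega
  set T := {v : V // v ≠ u} with hT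
  set p : T → Prop := fun v => G.Adj u v.1 with hp
  have hcardT : Fintype.card T = n - 1 := by
    have : Fintype.card {v : V // ¬ (v = u)} = Fintype.card V - Fintype.card {v : V // v = u} :=
      Fintype.card_subtype_compl _
    rw [Fintype.card_subtype_eq, hV] at this
    exact this
  have eadj : {x : T // p x} ≃ G.neighborSet u :=
    { toFun := fun x => ⟨x.1.1, x.2⟩
      invFun := fun w => ⟨⟨w.1, fun h => G.irrefl (h ▸ w.2)⟩, w.2⟩
      left_inv := fun x => by ext; rfl
      right_inv := fun w => by ext; rfl }
  have hcardP : Fintype.card {x : T // p x} = k := by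
    rw [Fintype.card_congr eadj]
    have : Fintype.card (G.neighborSet u) = G.degree u := by
      rw [← SimpleGraph.card_neighborFinset_eq_degree, SimpleGraph.neighborFinset_def,
        Set.toFinset_card]
    rw [this, hdeg]
  have hcardQ : Fintype.card {x : T // ¬ p x} = n - 1 - k := by
    rw [Fintype.card_subtype_compl, hcardP, hcardT]
  have hsum' : n - 1 = k + (n - 1 - k) := by omega
  set ψ : (Fin k ⊕ Fin (n - 1 - k)) ≃ T :=
    (Equiv.sumCongr (Fintype.equivFinOfCardEq hcardP).symm
      (Fintype.equivFinOfCardEq hcardQ).symm).trans (Equiv.sumCompl p) with hψ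
  set φ : Fin (n - 1) ≃ T :=
    ((finCongr hsum').trans finSumFinEquiv.symm).trans ψ with hφdef
  have hφ : ∀ j : Fin (n - 1), (G.Adj u (φ j).1 ↔ (j : ℕ) < k) := by
    intro j
    by_cases hj : (j : ℕ) < k
    · have h1 : finCongr hsum' j = Fin.castAdd (n - 1 - k) ⟨(j : ℕ), hj⟩ := by
        apply Fin.ext
        simp
      have h2 : φ j = ψ (Sum.inl ⟨(j : ℕ), hj⟩) := by
        rw [hφdef]
        simp only [Equiv.trans_apply]
        rw [h1, finSumFinEquiv_symm_apply_castAdd]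
      have h3 : ψ (Sum.inl ⟨(j : ℕ), hj⟩) =
          ((Fintype.equivFinOfCardEq hcardP).symm ⟨(j : ℕ), hj⟩ : {x : T // p x}).1 := by
        rw [hψ]
        simp only [Equiv.trans_apply, Equiv.sumCongr_apply, Sum.map_inl]
        rw [Equiv.sumCompl_apply_inl]
      rw [h2, h3]
      simp only [iff_true_intro hj, iff_true]
      exact ((Fintype.equivFinOfCardEq hcardP).symm ⟨(j : ℕ), hj⟩).2
    · have hj2 : k + ((j : ℕ) - k) = (j : ℕ) := by omega
      have hjk : (j : ℕ) - k < n - 1 - k := by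
        have := j.2
        omega
      have h1 : finCongr hsum' j = Fin.natAdd k ⟨(j : ℕ) - k, hjk⟩ := by
        apply Fin.ext
        simp [hj2]
      have h2 : φ j = ψ (Sum.inr ⟨(j : ℕ) - k, hjk⟩) := by
        rw [hφdef]
        simp only [Equiv.trans_apply]
        rw [h1, finSumFinEquiv_symm_apply_natAdd]
      have h3 : ψ (Sum.inr ⟨(j : ℕ) - k, hjk⟩) =
          ((Fintype.equivFinOfCardEq hcardQ).symm ⟨(j : ℕ) - k, hjk⟩ : {x : T // ¬ p x}).1 := by
        rw [hψ]
        simp only [Equiv.trans_apply, Equiv.sumCongr_apply, Sum.map_inr]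
        rw [Equiv.sumCompl_apply_inr]
      rw [h2, h3]
      simp only [iff_false_intro hj, iff_false]
      exact ((Fintype.equivFinOfCardEq hcardQ).symm ⟨(j : ℕ) - k, hjk⟩).2
  -- the equiv Option (Fin (n-1)) ≃ V
  set e : Option (Fin (n - 1)) ≃ V :=
    { toFun := fun x => match x with
        | none => u
        | some j => (φ j).1
      invFun := fun v => if h : v = u then none else some (φ.symm ⟨v, h⟩)
      left_inv := by
        intro x
        match x with
        | none => simp
        | some j =>
          simp only
          rw [dif_neg (φ j).2]
          congr 1
          have : (⟨(φ j).1, (φ j).2⟩ : T) = φ j := by ext; rfl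
          rw [this, Equiv.symm_apply_apply]
      right_inv := by
        intro v
        by_cases h : v = u
        · subst h; simp
        · simp only [dif_neg h]
          have : φ (φ.symm ⟨v, h⟩) = ⟨v, h⟩ := Equiv.apply_symm_apply _ _
          rw [this] } with he
  refine ⟨(RelIso.mk e ?_).symm⟩
  intro x y
  match x, y with
  | none, none =>
    simp only [he]
    constructor
    · intro h; exact absurd h G.irrefl
    · intro h; exact absurd h zz_knk_adj_nn
  | none, some j =>
    show G.Adj u (φ j).1 ↔ (Knk n k).Adj none (some j)
    rw [zz_knk_adj_ns, hφ j]
  | some j, none =>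
    show G.Adj (φ j).1 u ↔ (Knk n k).Adj (some j) none
    rw [zz_knk_adj_sn, SimpleGraph.adj_comm, hφ j]
  | some i, some j =>
    show G.Adj (φ i).1 (φ j).1 ↔ (Knk n k).Adj (some i) (some j)
    rw [zz_knk_adj_ss]
    constructor
    · intro h hij
      rw [hij] at h
      exact G.irrefl h
    · intro hij
      apply hcomp _ _ (φ i).2 (φ j).2
      intro hval
      apply hij
      have : φ i = φ j := Subtype.ext hval
      exact φ.injective this

/-- **Theorem 2 for `Π₂` (Wang).** If `1 ≤ k ≤ n - 2` and `G` is a connected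
graph on `n` vertices having a edge cut of size at most `k`, then
`Π₂(G) ≤ k^k (n-1)^{k(n-1)} (n-2)^{(n-2)(n-k-1)}`, with equality iff
`G ≅ K_n^k`. -/
theorem multZagreb2_le_of_edgeCut {V : Type*} [Fintype V] (n k : ℕ)
    (hk : 1 ≤ k) (hkn : k ≤ n - 2)
    (G : SimpleGraph V) (hV : Fintype.card V = n) (hG : G.Connected)
    (hcut : ∃ F : Finset (Sym2 V), (F : Set (Sym2 V)) ⊆ G.edgeSet ∧ F.card ≤ k ∧
      ¬ (G.deleteEdges (F : Set (Sym2 V))).Connected) :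
    multZagreb2 G ≤
        k ^ k * (n - 1) ^ (k * (n - 1)) * (n - 2) ^ ((n - 2) * (n - k - 1)) ∧
      (multZagreb2 G =
          k ^ k * (n - 1) ^ (k * (n - 1)) * (n - 2) ^ ((n - 2) * (n - k - 1)) ↔
        Nonempty (G ≃g Knk n k)) := by
  classical
  have hkey := zz_key hk hkn hV hG hcut
  have hknkval := zz_knk_val hk hkn
  have heq_of_iso : Nonempty (G ≃g Knk n k) → multZagreb2 G =
      k ^ k * (n - 1) ^ (k * (n - 1)) * (n - 2) ^ ((n - 2) * (n - k - 1)) := by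
    rintro ⟨e⟩
    rw [zz_iso_inv G (Knk n k) e, hknkval]
  rcases hkey with hs | hlt
  · obtain ⟨u, h1, h2⟩ := hs
    have hiso := zz_structure_iso hV hk hkn h1 h2
    have heq := heq_of_iso hiso
    exact ⟨le_of_eq heq, ⟨fun _ => hiso, fun _ => heq⟩⟩
  · refine ⟨le_of_lt hlt, ⟨fun heq => absurd heq (ne_of_lt hlt), fun hiso =>
      absurd (heq_of_iso hiso) (ne_of_lt hlt)⟩⟩
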